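/- Let N be an algebraically closed field with a distinguished subfield P_N, and suppose the transcendence degree of N over P_N is at least κ for an infinite cardinal κ. Let A, A' ⊆ N be subsets of cardinality < κ, and let f : P_N(A) → P_N(A') be a field isomorphism whose restriction to P_N is a field automorphism of P_N. Then f extends to a field automorphism of N. -/

import Mathlib

set_option maxHeartbeats 1600000
set_option synthInstance.maxHeartbeats 400000

/-- `A` (a subset of `K`) is linearly disjoint from the subfield `B` over the subfield `C`:
every tuple of elements of `A` that is linearly independent over `C` is linearly
independent over `B`. -/
def LinDisjS (K : Type*) [Field K] (A : Set K) (B C : Subfield K) : Prop :=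
  ∀ (n : ℕ) (a : Fin n → K), (∀ i, a i ∈ A) →
    LinearIndependent C a → LinearIndependent B a

/-- Linear disjointness of the subfield `A` from `B` over `C`. -/
def LinDisj (K : Type*) [Field K] (A B C : Subfield K) : Prop :=
  LinDisjS K (A : Set K) B C
universe u

/-- The transcendence degree of the subfield `F` over the subfield `P` inside `K`:
the supremum of the cardinalities of subsets of `F` that are algebraically
independent over `P`. -/
noncomputable def trdeg {K : Type u} [Field K] (P F : Subfield K) : Cardinal.{u} :=
  ⨆ s : {s : Set K // s ⊆ (F : Set K) ∧ AlgebraicIndependent P (Subtype.val : s → K)},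
    Cardinal.mk s.1

open Cardinal Set

namespace Stmt15Aux

variable {N : Type u} [Field N]

def adjF (E : Subfield N) (S : Set N) : Subfield N := E ⊔ Subfield.closure S

lemma adjF_eq_closure (E : Subfield N) (S : Set N) :
    adjF E S = Subfield.closure (↑E ∪ S) := by
  rw [Subfield.closure_union, Subfield.closure_eq]; rfl

lemma le_adjF (E : Subfield N) (S : Set N) : E ≤ adjF E S := le_sup_left

lemma subset_adjF (E : Subfield N) (S : Set N) : S ⊆ ↑(adjF E S) :=
  fun x hx => SetLike.le_def.mp le_sup_right (Subfield.subset_closure hx)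

lemma adjF_mono {E : Subfield N} {S T : Set N} (h : S ⊆ T) : adjF E S ≤ adjF E T :=
  sup_le_sup_left (Subfield.closure_mono h) E

lemma adjF_le {E : Subfield N} {S : Set N} {F : Subfield N} (hE : E ≤ F) (hS : S ⊆ ↑F) :
    adjF E S ≤ F :=
  sup_le hE (Subfield.closure_le.mpr hS)

lemma adjF_adjF (E : Subfield N) (S T : Set N) : adjF (adjF E S) T = adjF E (S ∪ T) := by
  simp only [adjF, Subfield.closure_union, sup_assoc]

lemma adjF_empty (E : Subfield N) : adjF E ∅ = E := by
  simp [adjF, Subfield.closure_empty]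

/-- workhorse for pushing algebraicity along base ring homs -/
lemma algS_push {R R' : Type*} [CommRing R] [CommRing R'] [Algebra R N] [Algebra R' N]
    (g : R →+* R') (hg : Function.Injective g)
    (hcomp : ∀ x, algebraMap R' N (g x) = algebraMap R N x) {z : N}
    (hz : IsAlgebraic R z) : IsAlgebraic R' z := by
  obtain ⟨p, hp, hpz⟩ := hz
  refine ⟨p.map g, fun h => hp (Polynomial.map_injective g hg (by simp [h])), ?_⟩
  rw [Polynomial.aeval_def, Polynomial.eval₂_map, ← hpz, Polynomial.aeval_def]
  congr 1
  ext x
  exact hcomp x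

lemma algS_mono {E E' : Subfield N} (h : E ≤ E') {z : N}
    (hz : IsAlgebraic ↥E z) : IsAlgebraic ↥E' z :=
  by exact algS_push (N := N) (Subfield.inclusion h) (RingHom.injective _) (fun _ => rfl) hz

lemma algS_self {E : Subfield N} {z : N} (hz : z ∈ E) : IsAlgebraic ↥E z :=
  isAlgebraic_algebraMap (⟨z, hz⟩ : ↥E)


lemma range_algebraMap_subfield (E : Subfield N) :
    Set.range (algebraMap ↥E N) = (E : Set N) := by
  ext x
  exact ⟨fun ⟨y, hy⟩ => hy ▸ y.2, fun hx => ⟨⟨x, hx⟩, rfl⟩⟩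

lemma adjF_eq_toSubfield (E : Subfield N) (S : Set N) :
    adjF E S = (IntermediateField.adjoin ↥E S).toSubfield := by
  rw [IntermediateField.adjoin_toSubfield, adjF_eq_closure, range_algebraMap_subfield]

/-- inclusion of a subalgebra of `N` into a subfield of `N` -/
def incRH {E : Subfield N} (D : Subalgebra ↥E N) (K : Subfield N) (h : (D : Set N) ⊆ ↑K) :
    ↥D →+* ↥K where
  toFun a := ⟨a.1, h a.2⟩
  map_one' := rfl
  map_mul' _ _ := rfl
  map_zero' := rfl
  map_add' _ _ := rfl

lemma algS_of_adjF_algebraic {E : Subfield N} {S : Set N}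
    (hS : ∀ y ∈ S, IsAlgebraic ↥E y) {z : N}
    (hz : IsAlgebraic ↥(adjF E S) z) : IsAlgebraic ↥E z := by
  set K := IntermediateField.adjoin ↥E S with hK
  haveI : Algebra.IsAlgebraic ↥E ↥K :=
    IntermediateField.isAlgebraic_adjoin (fun x hx => (hS x hx).isIntegral)
  have hsub : (↑(adjF E S) : Set N) ⊆ (K : Set N) := by
    rw [adjF_eq_toSubfield]; intro x hx; exact hx
  have hz' : IsAlgebraic ↥K z := by
    refine algS_push (N := N)
      ({ toFun := fun a => (⟨a.1, hsub a.2⟩ : ↥K),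
         map_one' := rfl, map_mul' := fun _ _ => rfl,
         map_zero' := rfl, map_add' := fun _ _ => rfl } : ↥(adjF E S) →+* ↥K)
      (fun a b hab => by
        have h2 := congrArg Subtype.val hab
        exact Subtype.ext h2)
      (fun _ => rfl) hz
  haveI : Algebra.IsIntegral ↥E ↥K := Algebra.IsAlgebraic.isIntegral
  exact (isIntegral_trans z hz'.isIntegral).isAlgebraic

lemma algS_adj_iff {E : Subfield N} {S : Set N} {z : N} :
    IsAlgebraic ↥(adjF E S) z ↔ IsAlgebraic ↥(Algebra.adjoin ↥E S) z := by
  set D := Algebra.adjoin ↥E S with hD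
  have hDsub : (D : Set N) ⊆ ↑(adjF E S) := by
    intro x hx
    rw [adjF_eq_toSubfield]
    exact IntermediateField.algebra_adjoin_le_adjoin ↥E S hx
  set KK := adjF E S with hKK
  letI : Algebra ↥D ↥KK := (incRH D KK hDsub).toAlgebra
  haveI : IsScalarTower ↥D ↥KK N := IsScalarTower.of_algebraMap_eq fun x => rfl
  haveI : IsDomain ↥D := Function.Injective.isDomain D.subtype Subtype.val_injective
  have hsubring : Subring.closure ((E : Set N) ∪ S) ≤ D.toSubring := by
    refine Subring.closure_le.mpr (Set.union_subset ?_ ?_)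
    · intro x hx
      exact D.algebraMap_mem (⟨x, hx⟩ : ↥E)
    · exact Algebra.subset_adjoin
  haveI : IsFractionRing ↥D ↥KK := by
    refine ⟨⟨?map_units', ?surj', ?exists_of_eq⟩⟩
    case map_units' =>
      rintro ⟨y, hy⟩
      have hy0 : y ≠ 0 := nonZeroDivisors.ne_zero hy
      refine isUnit_iff_ne_zero.mpr ?_
      intro h
      exact hy0 (Subtype.ext (show (y : N) = 0 from congrArg Subtype.val h))
    case surj' =>
      rintro ⟨k, hk⟩
      rw [hKK, adjF_eq_closure] at hk
      obtain ⟨y, hy, z, hz, hyz⟩ := Subfield.mem_closure_iff.mp hk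
      by_cases hz0 : z = 0
      · refine ⟨⟨0, 1⟩, ?_⟩
        have : k = 0 := by rw [← hyz, hz0, div_zero]
        apply Subtype.ext
        show k * (1 : N) = 0
        rw [mul_one, this]
      · refine ⟨⟨⟨y, hsubring hy⟩, ⟨⟨z, hsubring hz⟩,
          mem_nonZeroDivisors_of_ne_zero
            (fun h => hz0 (show z = (0 : N) from congrArg Subtype.val h))⟩⟩, ?_⟩
        apply Subtype.ext
        show k * z = y
        rw [← hyz, div_mul_cancel₀]
        exact hz0
    case exists_of_eq =>
      intro x y h
      have h2 := congrArg Subtype.val h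
      have hxy : x = y := Subtype.ext h2
      exact ⟨1, by rw [hxy]⟩
  exact (IsFractionRing.isAlgebraic_iff ↥D ↥KK N).symm


lemma trans_adj_of_indep {E : Subfield N} {k : ℕ} {x : Fin k → N}
    (hx : AlgebraicIndependent ↥E x) {t : Set (Fin k)} {i : Fin k} (hi : i ∉ t) :
    ¬ IsAlgebraic ↥(adjF E (x '' t)) (x i) := by
  intro halg
  have hsub : AlgebraicIndependent ↥E (x ∘ (Subtype.val : t → Fin k)) :=
    hx.comp Subtype.val Subtype.val_injective
  have hm : Function.Injective (fun o : Option t => o.elim i Subtype.val) := by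
    rintro (_ | a) (_ | b) h
    · rfl
    · exact absurd ((show i = (b : Fin k) from h) ▸ b.2) hi
    · exact absurd ((show (a : Fin k) = i from h).symm ▸ a.2) hi
    · exact congrArg some (Subtype.ext (show (a : Fin k) = b from h))
  have hopt : AlgebraicIndependent ↥E (fun o : Option t => o.elim (x i) (x ∘ Subtype.val)) := by
    have h2 := hx.comp _ hm
    convert h2 using 1
    funext o
    cases o <;> rfl
  have htr := (hsub.option_iff_transcendental (x i)).mp hopt
  have hr : Set.range (x ∘ (Subtype.val : t → Fin k)) = x '' t := by
    rw [Set.range_comp, Subtype.range_coe]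
  rw [hr] at htr
  exact htr (algS_adj_iff.mp halg)

lemma indep_shift {E : Subfield N} {k : ℕ} {x : Fin (k+1) → N}
    (hx : AlgebraicIndependent ↥E x) :
    AlgebraicIndependent ↥(adjF E {x 0}) (x ∘ Fin.succ) := by
  refine algebraicIndependent_of_finite_type' ?_ ?_
  · exact fun a b h => Subtype.ext h
  intro t _ _ i hi halg
  have h1 : IsAlgebraic ↥(adjF (adjF E {x 0}) ((x ∘ Fin.succ) '' t)) (x (Fin.succ i)) :=
    algS_adj_iff.mpr halg
  rw [adjF_adjF] at h1
  have hset : ({x 0} : Set N) ∪ (x ∘ Fin.succ) '' t = x '' (insert 0 (Fin.succ '' t)) := by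
    rw [Set.image_comp, Set.image_insert_eq, Set.insert_eq]
  rw [hset] at h1
  have hi' : Fin.succ i ∉ insert 0 (Fin.succ '' t) := by
    intro hmem
    rcases Set.mem_insert_iff.mp hmem with h0 | ⟨j, hj, hej⟩
    · exact Fin.succ_ne_zero i h0
    · exact hi ((Fin.succ_injective _ hej.symm) ▸ hj)
  exact trans_adj_of_indep hx hi' h1

lemma exchange_single {F : Subfield N} {x y : N} (hx : ¬ IsAlgebraic ↥F x)
    (h : IsAlgebraic ↥(adjF F {y}) x) : IsAlgebraic ↥(adjF F {x}) y := by
  by_contra hny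
  have hyF : ¬ IsAlgebraic ↥F y := by
    intro hyalg
    exact hx (algS_of_adjF_algebraic (fun z hz => Set.mem_singleton_iff.mp hz ▸ hyalg) h)
  have h1 : AlgebraicIndependent ↥F (fun _ : Unit => x) :=
    algebraicIndependent_unique_type_iff.mpr hx
  have hpair : AlgebraicIndependent ↥F (fun o : Option Unit => o.elim y fun _ => x) := by
    refine (h1.option_iff_transcendental y).mpr ?_
    rw [Set.range_const]
    intro halg
    exact hny (algS_adj_iff.mpr halg)
  have hm : Function.Injective
      (fun o : Option Unit => (Option.elim o (some ()) (fun _ => none) : Option Unit)) := by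
    decide
  have hswap : AlgebraicIndependent ↥F (fun o : Option Unit => o.elim x fun _ => y) := by
    have h2 := hpair.comp _ hm
    convert h2 using 1
    funext o
    cases o <;> rfl
  have h2 : AlgebraicIndependent ↥F (fun _ : Unit => y) :=
    algebraicIndependent_unique_type_iff.mpr hyF
  have h3 := (h2.option_iff_transcendental x).mp hswap
  rw [Set.range_const] at h3
  exact h3 (algS_adj_iff.mp h)


lemma exchange_finset {E : Subfield N} {T : Set N} (hT : T.Finite) {x : N}
    (hxT : IsAlgebraic ↥(adjF E T) x) (hxE : ¬ IsAlgebraic ↥E x) :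
    ∃ y ∈ T, ∀ z : N, IsAlgebraic ↥(adjF E T) z →
      IsAlgebraic ↥(adjF E (insert x (T \ {y}))) z := by
  classical
  set P : Finset N → Prop := fun v => ↑v ⊆ T ∧ IsAlgebraic ↥(adjF E ↑v) x with hP
  have hPT : hT.toFinset ∈ hT.toFinset.powerset.filter P := by
    rw [Finset.mem_filter, Finset.mem_powerset]
    refine ⟨le_refl _, ?_, ?_⟩
    · rw [Set.Finite.coe_toFinset]
    · rwa [Set.Finite.coe_toFinset]
  obtain ⟨v, hv, hmin⟩ := Finset.exists_min_image (hT.toFinset.powerset.filter P)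
    Finset.card ⟨hT.toFinset, hPT⟩
  rw [Finset.mem_filter, Finset.mem_powerset] at hv
  have hvT : (↑v : Set N) ⊆ T := hv.2.1
  have hvx : IsAlgebraic ↥(adjF E ↑v) x := hv.2.2
  have hne : v.Nonempty := by
    rcases Finset.eq_empty_or_nonempty v with h | h
    · exfalso
      apply hxE
      rw [h] at hvx
      rwa [Finset.coe_empty, adjF_empty] at hvx
    · exact h
  obtain ⟨y, hy⟩ := hne
  have hyT : y ∈ T := hvT hy
  set v' := v.erase y with hv'
  have hv'min : ¬ IsAlgebraic ↥(adjF E ↑v') x := by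
    intro halg
    have hmem : v' ∈ hT.toFinset.powerset.filter P := by
      rw [Finset.mem_filter, Finset.mem_powerset]
      exact ⟨(Finset.erase_subset _ _).trans hv.1,
        (Finset.coe_subset.mpr (Finset.erase_subset _ _)).trans hvT, halg⟩
    exact absurd (hmin v' hmem) (not_le.mpr (Finset.card_erase_lt_of_mem hy))
  have hcoe : (↑v : Set N) = ↑v' ∪ {y} := by
    rw [hv', Finset.coe_erase, Set.diff_union_self]
    exact (Set.union_eq_self_of_subset_right (Set.singleton_subset_iff.mpr hy)).symm
  have hx1 : IsAlgebraic ↥(adjF (adjF E ↑v') {y}) x := by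
    rw [adjF_adjF, ← hcoe]
    exact hvx
  have hxy := exchange_single hv'min hx1
  rw [adjF_adjF] at hxy
  set M := adjF E (insert x (T \ {y})) with hM
  have hsub1 : adjF E (↑v' ∪ {x}) ≤ M := by
    apply adjF_mono
    apply Set.union_subset
    · intro w hw
      rw [hv', Finset.coe_erase] at hw
      exact Set.mem_insert_of_mem _ ⟨hvT hw.1, hw.2⟩
    · exact Set.singleton_subset_iff.mpr (Set.mem_insert _ _)
  have hyM : IsAlgebraic ↥M y := algS_mono hsub1 hxy
  refine ⟨y, hyT, fun z hz => ?_⟩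
  have hsub2 : adjF E T ≤ adjF M {y} := by
    rw [hM, adjF_adjF]
    apply adjF_mono
    intro w hw
    by_cases hwy : w = y
    · exact Set.mem_union_right _ (hwy ▸ rfl)
    · exact Set.mem_union_left _ (Set.mem_insert_of_mem _ ⟨hw, hwy⟩)
  refine algS_of_adjF_algebraic (fun w hw => ?_) (algS_mono hsub2 hz)
  rw [Set.mem_singleton_iff.mp hw]
  exact hyM

theorem steinitz : ∀ (n : ℕ) (E : Subfield N) (T : Set N) (hT : T.Finite),
    hT.toFinset.card ≤ n → ∀ x : Fin (n+1) → N, AlgebraicIndependent ↥E x →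
    (∀ i, IsAlgebraic ↥(adjF E T) (x i)) → False := by
  intro n
  induction n with
  | zero =>
    intro E T hT hcard x hx halg
    have hTe : T = ∅ := by
      have h1 : hT.toFinset = ∅ := Finset.card_eq_zero.mp (Nat.le_zero.mp hcard)
      rwa [Set.Finite.toFinset_eq_empty] at h1
    have h2 := halg 0
    rw [hTe, adjF_empty] at h2
    exact hx.transcendental 0 h2
  | succ n IH =>
    intro E T hT hcard x hx halg
    have ht0 : ¬ IsAlgebraic ↥E (x 0) := hx.transcendental 0
    obtain ⟨y, hyT, H⟩ := exchange_finset hT (halg 0) ht0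
    set E' := adjF E {x 0} with hE'
    have hMeq : adjF E (insert (x 0) (T \ {y})) = adjF E' (T \ {y}) := by
      rw [hE', adjF_adjF, Set.insert_eq]
    have hT' : (T \ {y}).Finite := hT.diff
    have hcard' : hT'.toFinset.card ≤ n := by
      have hss : hT'.toFinset ⊂ hT.toFinset := by
        constructor
        · exact Set.Finite.toFinset_subset_toFinset.mpr Set.diff_subset
        · intro hle
          have hymem := hle (hT.mem_toFinset.mpr hyT)
          rw [hT'.mem_toFinset] at hymem
          exact hymem.2 rfl
      have := Finset.card_lt_card hss
      omega
    apply IH E' (T \ {y}) hT' hcard' (x ∘ Fin.succ) (indep_shift hx)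
    intro i
    have h3 := H (x (Fin.succ i)) (halg (Fin.succ i))
    rwa [hMeq] at h3

lemma count_fin {E : Subfield N} {T u : Set N} (hT : T.Finite)
    (hu : AlgebraicIndependent ↥E (Subtype.val : u → N))
    (halg : ∀ z ∈ u, IsAlgebraic ↥(adjF E T) z) : #u ≤ #T := by
  by_contra hlt
  push_neg at hlt
  set n := hT.toFinset.card with hn
  have hTn : #T = n := by
    calc #T = #(↑hT.toFinset : Set N) := mk_congr (Equiv.setCongr hT.coe_toFinset.symm)
    _ = n := Cardinal.mk_coe_finset
  have hsucc : ((n+1 : ℕ) : Cardinal) ≤ #u := by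
    rw [hTn] at hlt
    rw [Cardinal.nat_succ]
    exact Order.succ_le_of_lt hlt
  have hle : #(ULift.{u} (Fin (n+1))) ≤ #u := by
    rw [Cardinal.mk_uLift, Cardinal.mk_fin, Cardinal.lift_natCast]
    exact_mod_cast hsucc
  obtain ⟨g0⟩ := (Cardinal.le_def _ _).mp hle
  set g : Fin (n+1) ↪ ↥u := (Equiv.ulift.symm.toEmbedding).trans g0 with hg
  exact steinitz n E T hT (le_refl n) (Subtype.val ∘ g) (hu.comp g g.injective)
    (fun i => halg _ (g i).2)


lemma algS_iff_poly {E : Subfield N} {z : N} :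
    IsAlgebraic ↥E z ↔
      ∃ p : Polynomial N, p ≠ 0 ∧ (∀ i, p.coeff i ∈ E) ∧ Polynomial.eval z p = 0 := by
  constructor
  · rintro ⟨q, hq0, hqz⟩
    refine ⟨q.map (algebraMap ↥E N), ?_, ?_, ?_⟩
    · exact (Polynomial.map_ne_zero_iff (algebraMap ↥E N).injective).mpr hq0
    · intro i
      rw [Polynomial.coeff_map]
      exact (q.coeff i).2
    · rw [Polynomial.eval_map, ← Polynomial.aeval_def, hqz]
  · rintro ⟨p, hp0, hpc, hpe⟩
    have hmem : p ∈ Polynomial.lifts (algebraMap ↥E N) := by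
      rw [Polynomial.lifts_iff_coeff_lifts]
      exact fun n => ⟨⟨p.coeff n, hpc n⟩, rfl⟩
    obtain ⟨q, hq⟩ := (Polynomial.mem_lifts _).mp hmem
    refine ⟨q, ?_, ?_⟩
    · intro h
      rw [h, Polynomial.map_zero] at hq
      exact hp0 hq.symm
    · rw [Polynomial.aeval_def, Polynomial.eval₂_eq_eval_map, hq, hpe]

lemma algS_compact {E : Subfield N} {T : Set N} {z : N}
    (hz : IsAlgebraic ↥(adjF E T) z) :
    ∃ F : Finset N, ↑F ⊆ T ∧ IsAlgebraic ↥(adjF E ↑F) z := by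
  classical
  obtain ⟨p, hp0, hpc, hpe⟩ := algS_iff_poly.mp hz
  have hdir : Directed (· ≤ ·) (fun F : {F : Finset N // ↑F ⊆ T} => adjF E ↑F.1) := by
    rintro F G
    refine ⟨⟨F.1 ∪ G.1, ?_⟩, adjF_mono ?_, adjF_mono ?_⟩
    · rw [Finset.coe_union]; exact Set.union_subset F.2 G.2
    · rw [Finset.coe_union]; exact Set.subset_union_left
    · rw [Finset.coe_union]; exact Set.subset_union_right
  haveI : Nonempty {F : Finset N // ↑F ⊆ T} := ⟨⟨∅, by simp⟩⟩
  have hsup : adjF E T = ⨆ F : {F : Finset N // ↑F ⊆ T}, adjF E ↑F.1 := by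
    apply le_antisymm
    · apply sup_le
      · refine SetLike.le_def.mpr fun w hw => ?_
        rw [Subfield.mem_iSup_of_directed hdir]
        exact ⟨⟨∅, by simp⟩, SetLike.le_def.mp (le_adjF E _) hw⟩
      · apply Subfield.closure_le.mpr
        intro w hw
        rw [SetLike.mem_coe, Subfield.mem_iSup_of_directed hdir]
        refine ⟨⟨{w}, by simpa using hw⟩, ?_⟩
        apply subset_adjF
        simp
    · exact iSup_le fun F => adjF_mono F.2
  have hcoeff : ∀ i, ∃ F : {F : Finset N // ↑F ⊆ T}, p.coeff i ∈ adjF E ↑F.1 := by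
    intro i
    have h1 := hpc i
    rw [hsup] at h1
    exact (Subfield.mem_iSup_of_directed hdir).mp h1
  choose Fc hFc using hcoeff
  set Fbig : Finset N := p.support.sup (fun i => (Fc i).1) with hFbig
  refine ⟨Fbig, ?_, ?_⟩
  · intro a ha
    obtain ⟨i, _, hia⟩ := Finset.mem_sup.mp ha
    exact (Fc i).2 hia
  · apply algS_iff_poly.mpr ⟨p, hp0, ?_, hpe⟩
    intro i
    by_cases hi : i ∈ p.support
    · exact SetLike.le_def.mp
        (adjF_mono (Finset.coe_subset.mpr
          (Finset.le_sup (f := fun i => (Fc i).1) hi))) (hFc i)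
    · rw [Polynomial.notMem_support_iff.mp hi]
      exact (adjF E ↑Fbig).zero_mem

lemma count_le {E : Subfield N} {T u : Set N}
    (hu : AlgebraicIndependent ↥E (Subtype.val : u → N))
    (halg : ∀ z ∈ u, IsAlgebraic ↥(adjF E T) z) : #u ≤ max #T ℵ₀ := by
  classical
  by_cases hT : T.Finite
  · exact (count_fin hT hu halg).trans (le_max_left _ _)
  haveI hinf : Infinite ↥T := Set.infinite_coe_iff.mpr hT
  have hch : ∀ z : ↥u, ∃ F : {F : Finset N // ↑F ⊆ T},
      IsAlgebraic ↥(adjF E ↑F.1) z.1 := by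
    intro z
    obtain ⟨F, h1, h2⟩ := algS_compact (halg z.1 z.2)
    exact ⟨⟨F, h1⟩, h2⟩
  choose Φ hΦ using hch
  have hfib : ∀ F : {F : Finset N // ↑F ⊆ T}, #{z : ↥u // Φ z = F} ≤ ℵ₀ := by
    intro F
    set u' : Set N := {w | w ∈ u ∧ IsAlgebraic ↥(adjF E ↑F.1) w} with hu'
    have hsub : u' ⊆ u := fun w hw => hw.1
    have hcf : #u' ≤ #(↑F.1 : Set N) :=
      count_fin F.1.finite_toSet (hu.mono hsub) (fun z hz => hz.2)
    have emb : {z : ↥u // Φ z = F} ↪ ↥u' := by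
      refine ⟨fun z => ⟨z.1.1, z.1.2, ?_⟩, ?_⟩
      · have h2 := hΦ z.1
        rw [z.2] at h2
        exact h2
      · rintro a b hab
        have h1 := congrArg Subtype.val hab
        exact Subtype.ext (Subtype.ext h1)
    calc #{z : ↥u // Φ z = F} ≤ #u' := Cardinal.mk_le_of_injective emb.injective
    _ ≤ #(↑F.1 : Set N) := hcf
    _ = F.1.card := Cardinal.mk_coe_finset
    _ ≤ ℵ₀ := (Cardinal.nat_lt_aleph0 _).le
  have hdecomp : #u = Cardinal.sum (fun F : {F : Finset N // ↑F ⊆ T} =>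
      #{z : ↥u // Φ z = F}) := by
    rw [← Cardinal.mk_sigma]
    exact (mk_congr (Equiv.sigmaFiberEquiv Φ)).symm
  have hidx : #{F : Finset N // ↑F ⊆ T} ≤ #T := by
    have emb2 : {F : Finset N // ↑F ⊆ T} ↪ Finset ↥T := by
      refine ⟨fun F => F.1.subtype (· ∈ T), ?_⟩
      rintro F G hFG
      have hFG' : F.1.subtype (· ∈ T) = G.1.subtype (· ∈ T) := hFG
      apply Subtype.ext
      ext a
      constructor
      · intro haF
        have h1 : (⟨a, F.2 haF⟩ : ↥T) ∈ F.1.subtype (· ∈ T) :=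
          Finset.mem_subtype.mpr haF
        rw [hFG'] at h1
        exact Finset.mem_subtype.mp h1
      · intro haG
        have h1 : (⟨a, G.2 haG⟩ : ↥T) ∈ G.1.subtype (· ∈ T) :=
          Finset.mem_subtype.mpr haG
        rw [← hFG'] at h1
        exact Finset.mem_subtype.mp h1
    calc #{F : Finset N // ↑F ⊆ T} ≤ #(Finset ↥T) :=
      Cardinal.mk_le_of_injective emb2.injective
    _ = #T := Cardinal.mk_finset_of_infinite _
  have haT : ℵ₀ ≤ #T := Cardinal.aleph0_le_mk ↥T
  calc #u = Cardinal.sum (fun F : {F : Finset N // ↑F ⊆ T} => #{z : ↥u // Φ z = F}) :=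
    hdecomp
  _ ≤ Cardinal.sum (fun _ : {F : Finset N // ↑F ⊆ T} => ℵ₀) := Cardinal.sum_le_sum _ _ hfib
  _ = #{F : Finset N // ↑F ⊆ T} * ℵ₀ := Cardinal.sum_const' _ _
  _ ≤ #T * ℵ₀ := mul_le_mul_left hidx _
  _ = max #T ℵ₀ := Cardinal.mul_eq_max haT le_rfl


lemma indep_restrict {PN E : Subfield N} (h : PN ≤ E) {ι : Type u} {x : ι → N}
    (hx : AlgebraicIndependent ↥E x) : AlgebraicIndependent ↥PN x := by
  letI : Algebra ↥PN ↥E := (Subfield.inclusion h).toAlgebra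
  haveI : IsScalarTower ↥PN ↥E N := IsScalarTower.of_algebraMap_eq fun x => rfl
  exact AlgebraicIndependent.restrictScalars (RingHom.injective _) hx

lemma basis_spans {E : Subfield N} {s : Set N}
    (hs : IsTranscendenceBasis ↥E (Subtype.val : s → N)) (z : N) :
    IsAlgebraic ↥(adjF E s) z := by
  haveI := hs.isAlgebraic
  have h1 : IsAlgebraic ↥(Algebra.adjoin ↥E (Set.range (Subtype.val : s → N))) z :=
    Algebra.IsAlgebraic.isAlgebraic z
  rw [Subtype.range_coe] at h1
  exact algS_adj_iff.mpr h1

lemma basis_card_ge {PN : Subfield N} {κ : Cardinal.{u}} (hκ : ℵ₀ ≤ κ)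
    (htr : κ ≤ trdeg PN ⊤) {A : Set N} (hA : #A < κ) {s : Set N}
    (hspan : ∀ z : N, IsAlgebraic ↥(adjF PN (A ∪ s)) z)
    (hsp : AlgebraicIndependent ↥PN (Subtype.val : s → N)) : κ ≤ #s := by
  by_contra hlt
  push_neg at hlt
  haveI : Nonempty {ss : Set N // ss ⊆ ((⊤ : Subfield N) : Set N) ∧
      AlgebraicIndependent ↥PN (Subtype.val : ss → N)} :=
    ⟨⟨∅, by simp, algebraicIndependent_empty⟩⟩
  rcases Set.finite_or_infinite (A ∪ s) with hfin | hinf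
  · have hb2 : trdeg PN ⊤ ≤ #(A ∪ s : Set N) := by
      apply ciSup_le'
      rintro ⟨uu, -, huind⟩
      exact count_fin hfin huind (fun z _ => hspan z)
    have h5 : κ ≤ #(A ∪ s : Set N) := le_trans htr hb2
    exact absurd (h5.trans_lt hfin.lt_aleph0) (not_lt.mpr hκ)
  · have hbound : trdeg PN ⊤ ≤ max #(A ∪ s : Set N) ℵ₀ := by
      apply ciSup_le'
      rintro ⟨uu, -, huind⟩
      exact count_le huind (fun z _ => hspan z)
    have h1 : κ ≤ max #(A ∪ s : Set N) ℵ₀ := htr.trans hbound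
    have h2 : #(A ∪ s : Set N) ≤ #A + #s := Cardinal.mk_union_le _ _
    have h3 : #A + #s < κ := Cardinal.add_lt_of_lt hκ hA hlt
    haveI := hinf.to_subtype
    have hℵ : ℵ₀ ≤ #(A ∪ s : Set N) := Cardinal.aleph0_le_mk _
    have h4 : max #(A ∪ s : Set N) ℵ₀ < κ :=
      max_lt (h2.trans_lt h3) (lt_of_le_of_lt hℵ (h2.trans_lt h3))
    exact absurd h1 (not_le.mpr h4)

lemma basis_count {PN : Subfield N} {A t s : Set N}
    (ht_ind : AlgebraicIndependent ↥PN (Subtype.val : t → N))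
    (hspan : ∀ z : N, IsAlgebraic ↥(adjF PN (A ∪ s)) z)
    (hAs : #A ≤ #s) (hsinf : ℵ₀ ≤ #s) : #t ≤ #s := by
  have h1 := count_le ht_ind (fun z _ => hspan z)
  have h2 : #(A ∪ s : Set N) ≤ #A + #s := Cardinal.mk_union_le _ _
  rw [Cardinal.add_eq_right hsinf hAs] at h2
  calc #t ≤ max #(A ∪ s : Set N) ℵ₀ := h1
  _ ≤ max #s ℵ₀ := max_le_max h2 le_rfl
  _ = #s := max_eq_left hsinf

lemma extend_equiv [IsAlgClosed N] {E E' : Subfield N} (f : ↥E ≃+* ↥E') {s t : Set N}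
    (hs : IsTranscendenceBasis ↥E (Subtype.val : s → N))
    (ht : IsTranscendenceBasis ↥E' (Subtype.val : t → N))
    (e : ↥s ≃ ↥t) :
    ∃ σ : N ≃+* N, ∀ (x : N) (hx : x ∈ E), σ x = (f ⟨x, hx⟩ : N) := by
  let Ds := Algebra.adjoin ↥E (Set.range (Subtype.val : s → N))
  let Dt := Algebra.adjoin ↥E' (Set.range (Subtype.val : t → N))
  let ψ : MvPolynomial ↥s ↥E ≃+* MvPolynomial ↥t ↥E' :=
    (MvPolynomial.mapEquiv ↥s (f : ↥E ≃+* ↥E')).trans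
      (MvPolynomial.renameEquiv ↥E' e).toRingEquiv
  let e2 : ↥Ds ≃+* ↥Dt :=
    (hs.1.aevalEquiv.symm.toRingEquiv).trans (ψ.trans ht.1.aevalEquiv.toRingEquiv)
  haveI hnz1 : Module.IsTorsionFree ↥Ds N :=
    Module.isTorsionFree_iff_algebraMap_injective.mpr (fun a b hab => Subtype.ext hab)
  haveI hnz2 : Module.IsTorsionFree ↥Dt N :=
    Module.isTorsionFree_iff_algebraMap_injective.mpr (fun a b hab => Subtype.ext hab)
  haveI hac1 : IsAlgClosure ↥Ds N := ⟨inferInstance, hs.isAlgebraic⟩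
  haveI hac2 : IsAlgClosure ↥Dt N := ⟨inferInstance, ht.isAlgebraic⟩
  refine ⟨IsAlgClosure.equivOfEquiv N N e2, ?_⟩
  intro x hx
  have hkey := IsAlgClosure.equivOfEquiv_algebraMap N N e2 (algebraMap ↥E ↥Ds ⟨x, hx⟩)
  have hxval : algebraMap ↥Ds N (algebraMap ↥E ↥Ds ⟨x, hx⟩) = x := rfl
  have he2 : e2 (algebraMap ↥E ↥Ds ⟨x, hx⟩) = algebraMap ↥E' ↥Dt (f ⟨x, hx⟩) := by
    show ht.1.aevalEquiv (ψ (hs.1.aevalEquiv.symm (algebraMap ↥E ↥Ds ⟨x, hx⟩))) = _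
    have h1 : hs.1.aevalEquiv.symm (algebraMap ↥E ↥Ds ⟨x, hx⟩) =
        MvPolynomial.C (⟨x, hx⟩ : ↥E) := by
      rw [AlgEquiv.symm_apply_eq, ← MvPolynomial.algebraMap_eq]
      exact (hs.1.aevalEquiv.commutes ⟨x, hx⟩).symm
    rw [h1]
    have h2 : ψ (MvPolynomial.C (⟨x, hx⟩ : ↥E)) = MvPolynomial.C (f ⟨x, hx⟩) := by
      show (MvPolynomial.renameEquiv ↥E' e).toRingEquiv
        ((MvPolynomial.mapEquiv ↥s (f : ↥E ≃+* ↥E')) (MvPolynomial.C (⟨x, hx⟩ : ↥E))) = _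
      have hm : (MvPolynomial.mapEquiv ↥s (f : ↥E ≃+* ↥E')) (MvPolynomial.C (⟨x, hx⟩ : ↥E))
          = MvPolynomial.C (f ⟨x, hx⟩) := MvPolynomial.map_C _ _
      rw [hm]
      exact MvPolynomial.rename_C _ _
    rw [h2, ← MvPolynomial.algebraMap_eq]
    exact ht.1.aevalEquiv.commutes (f ⟨x, hx⟩)
  rw [hxval, he2] at hkey
  exact hkey.trans rfl


end Stmt15Aux

open Stmt15Aux in
/-- An isomorphism `P_N(A) → P_N(A')` restricting to an automorphism of `P_N` extends to an
automorphism of `N`, provided `trdeg(N/P_N) ≥ κ > |A|, |A'|`. -/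
theorem stmt15 (N : Type u) [Field N] [IsAlgClosed N] (PN : Subfield N)
    (κ : Cardinal.{u}) (hκ : Cardinal.aleph0 ≤ κ) (htr : κ ≤ trdeg PN ⊤)
    (A A' : Set N) (hA : Cardinal.mk A < κ) (hA' : Cardinal.mk A' < κ)
    (f : ↥(PN ⊔ Subfield.closure A) ≃+* ↥(PN ⊔ Subfield.closure A'))
    (hfP : ∀ (x : N) (hx : x ∈ PN),
      (f ⟨x, SetLike.le_def.mp le_sup_left hx⟩ : N) ∈ PN)
    (hfPsurj : ∀ y ∈ PN, ∃ (x : N) (hx : x ∈ PN),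
      (f ⟨x, SetLike.le_def.mp le_sup_left hx⟩ : N) = y) :
    ∃ σ : N ≃+* N, ∀ (x : N) (hx : x ∈ PN ⊔ Subfield.closure A),
      σ x = (f ⟨x, hx⟩ : N) := by
  classical
  obtain ⟨s, hs⟩ := exists_isTranscendenceBasis ↥(PN ⊔ Subfield.closure A) N
  obtain ⟨t, ht⟩ := exists_isTranscendenceBasis ↥(PN ⊔ Subfield.closure A') N
  have hs' : IsTranscendenceBasis ↥(adjF PN A) (Subtype.val : s → N) := hs
  have ht' : IsTranscendenceBasis ↥(adjF PN A') (Subtype.val : t → N) := ht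
  have hspan_s : ∀ z : N, IsAlgebraic ↥(adjF PN (A ∪ s)) z := by
    intro z
    have h1 := basis_spans hs' z
    rwa [adjF_adjF] at h1
  have hspan_t : ∀ z : N, IsAlgebraic ↥(adjF PN (A' ∪ t)) z := by
    intro z
    have h1 := basis_spans ht' z
    rwa [adjF_adjF] at h1
  have hsPN : AlgebraicIndependent ↥PN (Subtype.val : s → N) :=
    indep_restrict le_sup_left hs'.1
  have htPN : AlgebraicIndependent ↥PN (Subtype.val : t → N) :=
    indep_restrict le_sup_left ht'.1
  have hκs : κ ≤ #s := basis_card_ge hκ htr hA hspan_s hsPN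
  have hκt : κ ≤ #t := basis_card_ge hκ htr hA' hspan_t htPN
  have hst : #s = #t :=
    le_antisymm
      (basis_count hsPN hspan_t ((le_of_lt hA').trans hκt) (hκ.trans hκt))
      (basis_count htPN hspan_s ((le_of_lt hA).trans hκs) (hκ.trans hκs))
  obtain ⟨e⟩ := Cardinal.eq.mp hst
  obtain ⟨σ, hσ⟩ := extend_equiv f hs ht e
  exact ⟨σ, hσ⟩
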